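/- Let π2 : ℝ → ℝ be continuous, strictly decreasing on (-∞, x̂2), strictly increasing on (x̂2, ∞), with π2(x) → ∞ as x → -∞. Let m' : ℝ → (0,∞) be continuous with m(a, ∞) := ∫ₐ^∞ m'(t)dt < ∞ and ∫ₐ^∞ |π2(t)|m'(t)dt < ∞ for all a. Define l2(a) = ∫ₐ^∞ (π2(t) - π2(a))m'(t)dt. Then l2(a) > 0 for all a ≥ x̂2, l2 is strictly increasing on (-∞, x̂2) with l2(a) → -∞ as a → -∞; hence l2 = 0 has a unique root a* < x̂2, which is the unique global minimizer of J2(a) = (1/m(a,∞))·∫ₐ^∞ π2(t)m'(t)dt, and J2(a*) = π2(a*). -/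
import Mathlib

open Real Filter MeasureTheory

lemma splitIci (f : ℝ → ℝ) {a b : ℝ} (hfi : IntegrableOn f (Set.Ici a)) (hab : a ≤ b) :
    ∫ t in Set.Ici a, f t = (∫ t in Set.Ico a b, f t) + ∫ t in Set.Ici b, f t := by
  rw [← Set.Ico_union_Ici_eq_Ici hab] at hfi ⊢
  exact setIntegral_union (by rw [Set.disjoint_left]; rintro x ⟨_, hx⟩ hx'; exact absurd hx' (not_le.2 hx))
    measurableSet_Ici (hfi.mono_set Set.subset_union_left)
    (hfi.mono_set Set.subset_union_right)

lemma posInt (f : ℝ → ℝ) (s sub : Set ℝ) (hfi : IntegrableOn f s)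
    (hs : MeasurableSet s)
    (h0 : ∀ x ∈ s, 0 ≤ f x) (hsub : sub ⊆ s) (hpos : ∀ x ∈ sub, 0 < f x)
    (hμ : 0 < volume sub) : 0 < ∫ t in s, f t := by
  rw [setIntegral_pos_iff_support_of_nonneg_ae
    ((ae_restrict_iff' hs).2 (.of_forall h0)) hfi]
  refine hμ.trans_le (measure_mono fun x hx => ⟨(hpos x hx).ne', hsub hx⟩)

lemma contTail (f : ℝ → ℝ) (hf : Continuous f) (hfi : ∀ a, IntegrableOn f (Set.Ici a)) :
    Continuous fun a => ∫ t in Set.Ici a, f t := by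
  have key : ∀ a : ℝ, ∫ t in Set.Ici a, f t = (∫ t in Set.Ici 0, f t) - ∫ x in (0:ℝ)..a, f x := by
    intro a
    rcases le_total a 0 with h | h
    · rw [splitIci f (hfi a) h, intervalIntegral.integral_symm,
        intervalIntegral.integral_of_le h, integral_Ioc_eq_integral_Ioo,
        integral_Ico_eq_integral_Ioo]
      ring
    · rw [splitIci f (hfi 0) h, intervalIntegral.integral_of_le h,
        integral_Ioc_eq_integral_Ioo, integral_Ico_eq_integral_Ioo]
      ring
  have : (fun a => ∫ t in Set.Ici a, f t)
      = fun a => (∫ t in Set.Ici 0, f t) - ∫ x in (0:ℝ)..a, f x := funext key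
  rw [this]
  exact continuous_const.sub
    (intervalIntegral.continuous_primitive (fun a b => hf.intervalIntegrable a b) 0)

theorem stmt15 (π2 m' : ℝ → ℝ) (xhat2 : ℝ)
    (hπ2cont : Continuous π2)
    (hπ2anti : StrictAntiOn π2 (Set.Iic xhat2))
    (hπ2mono : StrictMonoOn π2 (Set.Ici xhat2))
    (hπ2bot : Tendsto π2 atBot atTop)
    (hm'cont : Continuous m') (hm'pos : ∀ x, 0 < m' x)
    (hm'int : ∀ a : ℝ, IntegrableOn m' (Set.Ici a))
    (hπm'int : ∀ a : ℝ, IntegrableOn (fun t => π2 t * m' t) (Set.Ici a))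
    (l2 J2 : ℝ → ℝ)
    (hl2 : ∀ a, l2 a = ∫ t in Set.Ici a, (π2 t - π2 a) * m' t)
    (hJ2 : ∀ a, J2 a = (1 / ∫ t in Set.Ici a, m' t) * ∫ t in Set.Ici a, π2 t * m' t) :
    (∀ a, xhat2 ≤ a → 0 < l2 a) ∧
    StrictMonoOn l2 (Set.Iio xhat2) ∧
    Tendsto l2 atBot atBot ∧
    ∃! astar : ℝ, astar < xhat2 ∧ l2 astar = 0 ∧
      (∀ a : ℝ, a ≠ astar → J2 astar < J2 a) ∧
      J2 astar = π2 astar := by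
  set G : ℝ → ℝ := fun a => ∫ t in Set.Ici a, π2 t * m' t with hG
  set M : ℝ → ℝ := fun a => ∫ t in Set.Ici a, m' t with hM
  -- integrability of (π2 t - c) * m' t
  have hint : ∀ c a : ℝ, IntegrableOn (fun t => (π2 t - c) * m' t) (Set.Ici a) := by
    intro c a
    have h := (hπm'int a).sub ((hm'int a).const_mul c)
    exact MeasureTheory.IntegrableOn.congr_fun h
      (fun t _ => by simp only [Pi.sub_apply]; ring) measurableSet_Ici
  -- the basic identity
  have heq : ∀ c a : ℝ, (∫ t in Set.Ici a, (π2 t - c) * m' t) = G a - c * M a := by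
    intro c a
    have e : (fun t => (π2 t - c) * m' t) = fun t => π2 t * m' t - c * m' t :=
      funext fun t => by ring
    rw [e, integral_sub (hπm'int a) ((hm'int a).const_mul c), integral_const_mul]
  have Mpos : ∀ a, 0 < M a := fun a =>
    posInt m' (Set.Ici a) (Set.Ioi a) (hm'int a) measurableSet_Ici
      (fun x _ => (hm'pos x).le) Set.Ioi_subset_Ici_self (fun x _ => hm'pos x)
      (by simp [Real.volume_Ioi])
  -- Part 1
  have part1 : ∀ a, xhat2 ≤ a → 0 < l2 a := by
    intro a ha
    rw [hl2 a]
    refine posInt _ (Set.Ici a) (Set.Ioi a) (hint _ a) measurableSet_Ici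
      (fun x hx => mul_nonneg (sub_nonneg.2 (hπ2mono.monotoneOn
        (Set.mem_Ici.2 ha) (Set.mem_Ici.2 (ha.trans hx)) hx)) (hm'pos x).le)
      Set.Ioi_subset_Ici_self
      (fun x hx => mul_pos (sub_pos.2 (hπ2mono (Set.mem_Ici.2 ha)
        (Set.mem_Ici.2 (ha.trans (le_of_lt hx))) hx)) (hm'pos x))
      (by simp [Real.volume_Ioi])
  -- l2 in terms of G and M
  have hl2' : ∀ a, l2 a = G a - π2 a * M a := fun a => by rw [hl2 a, heq]
  -- Part 2 : strict monotonicity on Iio xhat2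
  have part2 : StrictMonoOn l2 (Set.Iio xhat2) := by
    intro a ha b hb hab
    have hGa : G a = (∫ t in Set.Ico a b, π2 t * m' t) + G b := splitIci _ (hπm'int a) hab.le
    have hMa : M a = (∫ t in Set.Ico a b, m' t) + M b := splitIci _ (hm'int a) hab.le
    have key : 0 ≤ π2 a * (∫ t in Set.Ico a b, m' t) - ∫ t in Set.Ico a b, π2 t * m' t := by
      have e : (fun t => (π2 a - π2 t) * m' t) = fun t => π2 a * m' t - π2 t * m' t :=
        funext fun t => by ring
      have := setIntegral_nonneg measurableSet_Ico
        (fun t ht => mul_nonneg (sub_nonneg.2 (hπ2anti.antitoneOn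
          (Set.mem_Iic.2 (le_of_lt ha)) (Set.mem_Iic.2 (le_of_lt (ht.2.trans hb))) ht.1))
          (hm'pos t).le) (μ := volume) (f := fun t => (π2 a - π2 t) * m' t)
      rwa [e, integral_sub (((hm'int a).mono_set Set.Ico_subset_Ici_self).const_mul _)
        ((hπm'int a).mono_set Set.Ico_subset_Ici_self), integral_const_mul] at this
    have hπab : π2 b < π2 a := hπ2anti (Set.mem_Iic.2 (le_of_lt ha)) (Set.mem_Iic.2 (le_of_lt hb)) hab
    have hprod : 0 < (π2 a - π2 b) * M b := mul_pos (by linarith) (Mpos b)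
    rw [hl2' a, hl2' b, hGa, hMa]
    nlinarith [key, hprod]
  -- Part 3 : tendsto atBot
  have part3 : Tendsto l2 atBot atBot := by
    have hub : ∀ a ≤ xhat2, l2 a ≤ G xhat2 - π2 a * M xhat2 := by
      intro a ha
      have hsplit := splitIci _ (hint (π2 a) a) ha
      have h1 : (∫ t in Set.Ico a xhat2, (π2 t - π2 a) * m' t) ≤ 0 :=
        setIntegral_nonpos measurableSet_Ico (fun t ht => mul_nonpos_of_nonpos_of_nonneg
          (sub_nonpos.2 (hπ2anti.antitoneOn (Set.mem_Iic.2 ha)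
            (Set.mem_Iic.2 (le_of_lt ht.2)) ht.1)) (hm'pos t).le)
      have h2 : (∫ t in Set.Ici xhat2, (π2 t - π2 a) * m' t) = G xhat2 - π2 a * M xhat2 :=
        heq (π2 a) xhat2
      rw [hl2 a, hsplit, h2]
      linarith
    have h1 : Tendsto (fun a => π2 a * M xhat2) atBot atTop :=
      hπ2bot.atTop_mul_const (Mpos xhat2)
    have h2 : Tendsto (fun a => G xhat2 - π2 a * M xhat2) atBot atBot := by
      have := tendsto_atBot_add_const_left atBot (G xhat2) (tendsto_neg_atTop_atBot.comp h1)
      simpa [sub_eq_add_neg, Function.comp] using this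
    refine tendsto_atBot_mono' atBot ?_ h2
    filter_upwards [eventually_le_atBot xhat2] with a ha using hub a ha
  refine ⟨part1, part2, part3, ?_⟩
  -- continuity of l2
  have hl2cont : Continuous l2 := by
    have : l2 = fun a => G a - π2 a * M a := funext hl2'
    rw [this]
    exact (contTail _ (hπ2cont.mul hm'cont) hπm'int).sub
      (hπ2cont.mul (contTail _ hm'cont hm'int))
  -- find a0 with l2 a0 < 0
  obtain ⟨b0, hb0⟩ := eventually_atBot.mp (part3.eventually (eventually_le_atBot (-1)))
  set a0 : ℝ := min b0 xhat2 with ha0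
  have ha0x : a0 ≤ xhat2 := min_le_right _ _
  have ha0neg : l2 a0 ≤ -1 := hb0 a0 (min_le_left _ _)
  have hx2pos : 0 < l2 xhat2 := part1 xhat2 le_rfl
  obtain ⟨astar, hastarIcc, hastar0⟩ :=
    intermediate_value_Icc ha0x hl2cont.continuousOn ⟨by linarith, hx2pos.le⟩
  have hastarlt : astar < xhat2 :=
    lt_of_le_of_ne hastarIcc.2 (fun h => by rw [h] at hastar0; linarith)
  -- J2 astar = π2 astar
  have hGM : G astar = π2 astar * M astar := by
    have := hl2' astar; rw [hastar0] at this; linarith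
  have hJval : J2 astar = π2 astar := by
    rw [hJ2 astar]
    show (1 / M astar) * G astar = π2 astar
    rw [hGM, one_div, inv_mul_eq_div, mul_div_assoc, div_self (Mpos astar).ne', mul_one]
  -- positivity of h a := G a - π2 astar * M a for a ≠ astar
  have hpos : ∀ a : ℝ, a ≠ astar → 0 < G a - π2 astar * M a := by
    intro a hane
    rcases lt_or_gt_of_ne hane with hlt | hgt
    · -- a < astar
      have hsplit := splitIci _ (hint (π2 astar) a) hlt.le
      have h2 : (∫ t in Set.Ici astar, (π2 t - π2 astar) * m' t) = 0 := by
        rw [heq]; linarith [hGM]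
      have h1 : 0 < ∫ t in Set.Ico a astar, (π2 t - π2 astar) * m' t := by
        refine posInt _ _ (Set.Ico a astar) ((hint (π2 astar) a).mono_set Set.Ico_subset_Ici_self)
          measurableSet_Ico ?_ (subset_refl _) ?_ ?_
        · intro t ht
          exact mul_nonneg (sub_nonneg.2 (hπ2anti (Set.mem_Iic.2 ((ht.2.trans hastarlt).le))
            (Set.mem_Iic.2 hastarlt.le) ht.2).le) (hm'pos t).le
        · intro t ht
          exact mul_pos (sub_pos.2 (hπ2anti (Set.mem_Iic.2 ((ht.2.trans hastarlt).le))
            (Set.mem_Iic.2 hastarlt.le) ht.2)) (hm'pos t)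
        · rw [Real.volume_Ico]; exact ENNReal.ofReal_pos.2 (by linarith)
      have := heq (π2 astar) a
      rw [hsplit, h2] at this
      linarith
    · -- astar < a
      by_cases P : ∀ s ∈ Set.Ioc astar a, π2 s < π2 astar
      · have hsplit := splitIci _ (hint (π2 astar) astar) hgt.le
        have h0 : (∫ t in Set.Ici astar, (π2 t - π2 astar) * m' t) = 0 := by
          rw [heq]; linarith [hGM]
        have hIci : (∫ t in Set.Ici a, (π2 t - π2 astar) * m' t) = G a - π2 astar * M a :=
          heq (π2 astar) a
        have h1 : 0 < ∫ t in Set.Ico astar a, (π2 astar - π2 t) * m' t := by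
          refine posInt _ _ (Set.Ioo astar a) ?_ measurableSet_Ico ?_ Set.Ioo_subset_Ico_self ?_ ?_
          · have h := ((hint (π2 astar) astar).mono_set
              (Set.Ico_subset_Ici_self : Set.Ico astar a ⊆ Set.Ici astar)).neg
            exact MeasureTheory.IntegrableOn.congr_fun h
              (fun t _ => by simp only [Pi.neg_apply]; ring) measurableSet_Ico
          · intro t ht
            rcases eq_or_lt_of_le ht.1 with h | h
            · simp [← h]
            · exact mul_nonneg (sub_nonneg.2 (P t ⟨h, ht.2.le⟩).le) (hm'pos t).le
          · intro t ht
            exact mul_pos (sub_pos.2 (P t ⟨ht.1, ht.2.le⟩)) (hm'pos t)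
          · rw [Real.volume_Ioo]; exact ENNReal.ofReal_pos.2 (by linarith)
        have h2 : (∫ t in Set.Ico astar a, (π2 astar - π2 t) * m' t)
            = -∫ t in Set.Ico astar a, (π2 t - π2 astar) * m' t := by
          rw [← integral_neg]
          exact integral_congr_ae (.of_forall fun t => by ring)
        rw [h2] at h1
        rw [hsplit, hIci] at h0
        linarith
      · push_neg at P
        obtain ⟨s, hs, hπs⟩ := P
        have hsx : xhat2 < s := by
          by_contra h
          push_neg at h
          exact absurd (hπ2anti (Set.mem_Iic.2 hastarlt.le) (Set.mem_Iic.2 h) hs.1) (not_lt.2 hπs)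
        have hax : xhat2 ≤ a := (hsx.trans_le hs.2).le
        have hπa : π2 astar ≤ π2 a :=
          hπs.trans (hπ2mono.monotoneOn (Set.mem_Ici.2 hsx.le) (Set.mem_Ici.2 hax) hs.2)
        rw [← heq]
        refine posInt _ _ (Set.Ioi a) (hint _ a) measurableSet_Ici ?_
          Set.Ioi_subset_Ici_self ?_ (by simp [Real.volume_Ioi])
        · intro t ht
          refine mul_nonneg (sub_nonneg.2 (hπa.trans (hπ2mono.monotoneOn
            (Set.mem_Ici.2 hax) (Set.mem_Ici.2 (hax.trans ht)) ht))) (hm'pos t).le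
        · intro t ht
          refine mul_pos (sub_pos.2 (lt_of_le_of_lt hπa (hπ2mono (Set.mem_Ici.2 hax)
            (Set.mem_Ici.2 (hax.trans (le_of_lt ht))) ht))) (hm'pos t)
  refine ⟨astar, ⟨hastarlt, hastar0, ?_, hJval⟩, ?_⟩
  · intro a hane
    rw [hJval, hJ2 a]
    show π2 astar < (1 / M a) * G a
    rw [one_div, inv_mul_eq_div, lt_div_iff₀ (Mpos a)]
    linarith [hpos a hane]
  · rintro b ⟨hb1, hb2, -, -⟩
    exact part2.injOn (Set.mem_Iio.2 hb1) (Set.mem_Iio.2 hastarlt) (hb2.trans hastar0.symm)
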